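/- Let X ⊆ ℝⁿ be nonempty, closed, and convex, and suppose x : [0,T] → ℝⁿ is continuously differentiable with x(0) ∈ X and, for all t, ẋ(t) = Π_X(x(t) - φ(t)) - x(t) for some continuous φ : [0,T] → ℝⁿ. Then x(t) ∈ X for all t ∈ [0,T]. -/

import Mathlib

set_option maxHeartbeats 800000

open Metric Set Filter
open scoped RealInnerProductSpace Topology

/-- If `x : [0,T] → ℝⁿ` is continuously differentiable with
`x 0 ∈ X` and `ẋ(t) = proj (x t - φ t) - x t` for a continuous `φ`, where `X` is
nonempty closed convex with Euclidean projection `proj`, then `x t ∈ X` on `[0,T]`. -/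
theorem projected_dynamics_invariance
    {n : ℕ} (X : Set (EuclideanSpace ℝ (Fin n)))
    (hXne : X.Nonempty) (hXcl : IsClosed X) (hXconv : Convex ℝ X)
    (proj : EuclideanSpace ℝ (Fin n) → EuclideanSpace ℝ (Fin n))
    (hprojMem : ∀ z, proj z ∈ X)
    (hprojDist : ∀ z, ∀ w ∈ X, ‖z - proj z‖ ≤ ‖z - w‖)
    (T : ℝ) (hT : 0 ≤ T)
    (x φ : ℝ → EuclideanSpace ℝ (Fin n))
    (hφ : ContinuousOn φ (Set.Icc 0 T))
    (hx : ∀ t ∈ Set.Icc (0 : ℝ) T,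
      HasDerivWithinAt x (proj (x t - φ t) - x t) (Set.Icc 0 T) t)
    (hx0 : x 0 ∈ X) :
    ∀ t ∈ Set.Icc (0 : ℝ) T, x t ∈ X := by
  -- variational inequality for the projection
  have hvar : ∀ z, ∀ w ∈ X, ⟪z - proj z, w - proj z⟫ ≤ 0 := by
    intro z w hw
    haveI : Nonempty X := hXne.to_subtype
    have heq : ‖z - proj z‖ = ⨅ w : X, ‖z - w‖ := by
      refine le_antisymm (le_ciInf fun w => hprojDist z w w.2) ?_
      have hb : BddBelow (Set.range fun w : X => ‖z - (w : EuclideanSpace ℝ (Fin n))‖) := by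
        refine ⟨0, ?_⟩
        rintro b ⟨w, rfl⟩
        exact norm_nonneg _
      exact ciInf_le hb ⟨proj z, hprojMem z⟩
    exact ((norm_eq_iInf_iff_real_inner_le_zero hXconv (hprojMem z)).1 heq) w hw
  -- infDist equals distance to the projection
  have hinf : ∀ z, infDist z X = ‖z - proj z‖ := by
    intro z
    refine le_antisymm ?_ ?_
    · simpa [dist_eq_norm] using infDist_le_dist_of_mem (hprojMem z)
    · refine not_lt.1 fun h => ?_
      obtain ⟨y, hy, hlt⟩ := (infDist_lt_iff hXne).1 h
      exact absurd (hprojDist z y hy) (by rw [dist_eq_norm] at hlt; linarith)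
  -- the Lyapunov function
  set f : ℝ → ℝ := fun t => (infDist (x t) X) ^ 2 with hf_def
  have hxc : ContinuousOn x (Set.Icc 0 T) := fun t ht =>
    (hx t ht).continuousWithinAt
  have hfc : ContinuousOn f (Set.Icc 0 T) :=
    ((continuous_infDist_pt X).comp_continuousOn hxc).pow 2
  have key : ∀ t ∈ Set.Icc (0 : ℝ) T, f t ≤ gronwallBound 0 0 0 (t - 0) := by
    refine le_gronwallBound_of_liminf_deriv_right_le (f' := fun _ => 0) hfc ?_ ?_ ?_
    · intro t ht r hr
      -- comparison function h z = ‖x z - p‖² with p = proj (x t)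
      set p := proj (x t) with hp
      set h : ℝ → ℝ := fun z => ⟪x z - p, x z - p⟫ with hh
      have hxd := hx t (Ico_subset_Icc_self ht)
      have hdsub : HasDerivWithinAt (fun z => x z - p)
          (proj (x t - φ t) - x t) (Set.Icc 0 T) t := hxd.sub_const p
      have hhd : HasDerivWithinAt h
          (⟪x t - p, proj (x t - φ t) - x t⟫ + ⟪proj (x t - φ t) - x t, x t - p⟫)
          (Set.Icc 0 T) t := hdsub.inner ℝ hdsub
      -- the derivative of h at t is nonpositive
      have hder_le : ⟪x t - p, proj (x t - φ t) - x t⟫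
          + ⟪proj (x t - φ t) - x t, x t - p⟫ ≤ 0 := by
        have e1 : ⟪x t - p, proj (x t - φ t) - x t⟫
            = ⟪x t - p, proj (x t - φ t) - p⟫ - ⟪x t - p, x t - p⟫ := by
          rw [← inner_sub_right]; congr 1; abel
        have e2 : ⟪proj (x t - φ t) - x t, x t - p⟫
            = ⟪x t - p, proj (x t - φ t) - x t⟫ := real_inner_comm _ _
        have h2 : ⟪x t - p, proj (x t - φ t) - p⟫ ≤ (0:ℝ) :=
          hvar (x t) (proj (x t - φ t)) (hprojMem _)
        have h3 : (0:ℝ) ≤ ⟪x t - p, x t - p⟫ := real_inner_self_nonneg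
        rw [e2, e1]
        linarith
      -- slopes of h tend to the derivative along 𝓝[>] t
      have hmem : Set.Ioc t T ⊆ Set.Icc 0 T \ {t} := fun z hz =>
        ⟨⟨le_of_lt (lt_of_le_of_lt ht.1 hz.1), hz.2⟩, ne_of_gt hz.1⟩
      have htend : Tendsto (slope h t) (𝓝[>] t)
          (𝓝 (⟪x t - p, proj (x t - φ t) - x t⟫ + ⟪proj (x t - φ t) - x t, x t - p⟫)) := by
        have := (hasDerivWithinAt_iff_tendsto_slope).1 hhd
        rw [← nhdsWithin_Ioc_eq_nhdsGT ht.2]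
        exact this.mono_left (nhdsWithin_mono t hmem)
      have hev : ∀ᶠ z in 𝓝[>] t, slope h t z < r :=
        htend.eventually_lt_const (lt_of_le_of_lt hder_le hr)
      have hIoc : ∀ᶠ z in 𝓝[>] t, z ∈ Set.Ioc t T := by
        rw [← nhdsWithin_Ioc_eq_nhdsGT ht.2]
        exact eventually_mem_nhdsWithin
      refine ((hev.and hIoc).mono ?_).frequently
      rintro z ⟨hz1, hz2⟩
      have hzt : 0 < z - t := sub_pos.2 hz2.1
      have hfz : f z ≤ h z := by
        have : infDist (x z) X ≤ ‖x z - p‖ := by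
          simpa [dist_eq_norm] using infDist_le_dist_of_mem (hprojMem (x t))
        calc f z ≤ ‖x z - p‖ ^ 2 := by
              exact pow_le_pow_left₀ infDist_nonneg this 2
          _ = h z := by simp only [hh]; rw [real_inner_self_eq_norm_sq]
      have hft : f t = h t := by
        simp only [hf_def, hh]
        rw [real_inner_self_eq_norm_sq, hinf (x t)]
      have : (z - t)⁻¹ * (f z - f t) ≤ slope h t z := by
        rw [slope_def_field, div_eq_inv_mul]
        apply mul_le_mul_of_nonneg_left _ (le_of_lt (inv_pos.2 hzt))
        linarith
      exact lt_of_le_of_lt this hz1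
    · simp [hf_def, infDist_zero_of_mem hx0]
    · intro t ht; simp
  intro t ht
  have h0 := key t ht
  rw [gronwallBound_ε0_δ0] at h0
  have : infDist (x t) X = 0 := by
    have h1 : (infDist (x t) X) ^ 2 ≤ 0 := by exact h0
    nlinarith [infDist_nonneg (x := x t) (s := X)]
  exact (hXcl.mem_iff_infDist_zero hXne).2 this
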